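/- Assume 𝔨 is simple with negative definite Killing form B_𝔨 and B₂ is negative definite. Assume there exists P₁⁰ ∈ 𝔭₁ such that the centralizer 𝔱 = {Z ∈ 𝔨 : ⁅f₁(Z), P₁⁰⁆ = 0} is an abelian subalgebra of 𝔨, and assume ⁅f₂(𝔨), 𝔭₂⁆ ≠ 0. If (x, y) satisfies the GO condition, then (1 − x)/x = c₂(y − 1)/(c₁ y). -/

import Mathlib

open scoped RealInnerProductSpace
open FiniteDimensional Module

/-- Key linear-algebra lemma: given a pairwise-commuting family `S` of skew-adjoint
endomorphisms of a finite-dimensional real inner product space, every invariant subspace `W`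
contains a vector `K` such that any member of `S` annihilating `K` annihilates all of `W`. -/
lemma aux_reg {V : Type*} [NormedAddCommGroup V] [InnerProductSpace ℝ V]
    [FiniteDimensional ℝ V]
    (S : Set (V →ₗ[ℝ] V))
    (hskew : ∀ f ∈ S, ∀ a b : V, ⟪f a, b⟫ = -⟪a, f b⟫)
    (hcomm : ∀ f ∈ S, ∀ g ∈ S, ∀ v : V, f (g v) = g (f v)) :
    ∀ (n : ℕ) (W : Submodule ℝ V), Module.finrank ℝ W = n →
      (∀ f ∈ S, ∀ w ∈ W, f w ∈ W) →
      ∃ K ∈ W, ∀ f ∈ S, f K = 0 → ∀ w ∈ W, f w = 0 := by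
  intro n
  induction n using Nat.strong_induction_on with
  | _ n IH =>
  intro W hrank hinv
  by_cases hscal : ∀ f ∈ S, ∃ c : ℝ, ∀ w ∈ W, f (f w) = c • w
  · by_cases hW : W = ⊥
    · refine ⟨0, W.zero_mem, fun f hf _ w hw => ?_⟩
      rw [hW, Submodule.mem_bot] at hw
      simp [hw]
    · obtain ⟨K, hKW, hK0⟩ := Submodule.exists_mem_ne_zero_of_ne_bot hW
      refine ⟨K, hKW, fun f hf hfK w hw => ?_⟩
      obtain ⟨c, hc⟩ := hscal f hf
      have hc0 : c = 0 := by
        have h := hc K hKW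
        rw [hfK, map_zero] at h
        rcases smul_eq_zero.mp h.symm with h' | h'
        · exact h'
        · exact absurd h' hK0
      have h2 : f (f w) = 0 := by rw [hc w hw, hc0, zero_smul]
      have h3 : ⟪f w, f w⟫ = 0 := by
        rw [hskew f hf w (f w), h2, inner_zero_right, neg_zero]
      exact inner_self_eq_zero.mp h3
  · push_neg at hscal
    obtain ⟨f1, hf1S, hnon⟩ := hscal
    have hpq : ∀ v ∈ W, (f1 ∘ₗ f1) v ∈ W := fun v hv =>
      hinv f1 hf1S _ (hinv f1 hf1S _ hv)
    set G : W →ₗ[ℝ] W := (f1 ∘ₗ f1).restrict hpq with hGdef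
    have hGcoe : ∀ v : W, (G v : V) = f1 (f1 (v : V)) := fun v => rfl
    have hGsymm : G.IsSymmetric := by
      intro u v
      rw [Submodule.coe_inner, Submodule.coe_inner, hGcoe, hGcoe]
      rw [hskew f1 hf1S, hskew f1 hf1S, neg_neg]
    -- W is nontrivial
    obtain ⟨w0, hw0W, hw0⟩ := hnon 0
    rw [zero_smul] at hw0
    have hw0ne : w0 ≠ 0 := by rintro rfl; simp at hw0
    have : Nontrivial W := ⟨⟨w0, hw0W⟩, 0, by simpa using hw0ne⟩
    -- G has an eigenvalue
    obtain ⟨μ, hμ⟩ : ∃ μ : ℝ, Module.End.eigenspace G μ ≠ ⊥ := by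
      by_contra h
      push_neg at h
      have h2 := hGsymm.orthogonalComplement_iSup_eigenspaces_eq_bot
      rw [show (⨆ μ, Module.End.eigenspace G μ) = ⊥ from by simp [h]] at h2
      rw [Submodule.bot_orthogonal_eq_top] at h2
      have : (⟨w0, hw0W⟩ : W) ∈ (⊥ : Submodule ℝ W) := h2 ▸ Submodule.mem_top
      rw [Submodule.mem_bot] at this
      exact hw0ne (by simpa using congrArg (Subtype.val) this)
    -- the operator `A = G - μ·id`
    set A : W →ₗ[ℝ] W := G - μ • LinearMap.id with hAdef
    have hAcoe : ∀ v : W, ((A v : V)) = f1 (f1 (v : V)) - μ • (v : V) := fun v => rfl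
    have hAsymm : A.IsSymmetric := by
      intro u v
      simp only [hAdef, LinearMap.sub_apply, LinearMap.smul_apply, LinearMap.id_apply,
        inner_sub_left, inner_sub_right, real_inner_smul_left, real_inner_smul_right,
        hGsymm u v]
    have hkerne : LinearMap.ker A ≠ ⊥ := by
      obtain ⟨v0, hv0mem, hv0ne⟩ := (Submodule.ne_bot_iff _).mp hμ
      intro h
      have hv0 : A v0 = 0 := by
        have h2 := Module.End.mem_eigenspace_iff.mp hv0mem
        rw [hAdef]
        simp [h2]
      exact hv0ne (by simpa [h] using LinearMap.mem_ker.mpr hv0)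
    have hdisj : ∀ v : W, v ∈ LinearMap.ker A → v ∈ LinearMap.range A → v = 0 := by
      intro v hk hr
      obtain ⟨u, hu⟩ := hr
      have h3 : ⟪v, v⟫ = 0 := by
        have h4 : ⟪A u, v⟫ = 0 := by
          rw [hAsymm u v, LinearMap.mem_ker.mp hk, inner_zero_right]
        rwa [hu] at h4
      exact inner_self_eq_zero.mp h3
    have hinf : LinearMap.ker A ⊓ LinearMap.range A = ⊥ := by
      rw [eq_bot_iff]
      rintro v ⟨hk, hr⟩
      rw [Submodule.mem_bot]
      exact hdisj v hk hr
    have hsup : LinearMap.ker A ⊔ LinearMap.range A = ⊤ := by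
      apply Submodule.eq_top_of_finrank_eq
      have h1 := Submodule.finrank_sup_add_finrank_inf_eq (LinearMap.ker A) (LinearMap.range A)
      rw [hinf, finrank_bot, add_zero] at h1
      have h2 := LinearMap.finrank_range_add_finrank_ker A
      rw [h1]
      omega
    have hkerlt : finrank ℝ (LinearMap.ker A) < n := by
      rcases lt_or_eq_of_le ((Submodule.finrank_le (LinearMap.ker A)).trans_eq hrank) with h | h
      · exact h
      · exfalso
        have hker : LinearMap.ker A = ⊤ :=
          Submodule.eq_top_of_finrank_eq (by rw [h, hrank])
        obtain ⟨w, hwW, hw⟩ := hnon μ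
        apply hw
        have h4 : A ⟨w, hwW⟩ = 0 := LinearMap.mem_ker.mp (hker ▸ Submodule.mem_top)
        have h5 := congrArg (Subtype.val) h4
        rw [hAcoe] at h5
        simpa [sub_eq_zero] using h5
    have hrnglt : finrank ℝ (LinearMap.range A) < n := by
      rcases lt_or_eq_of_le ((Submodule.finrank_le (LinearMap.range A)).trans_eq hrank) with h | h
      · exact h
      · exfalso
        have hrng : LinearMap.range A = ⊤ :=
          Submodule.eq_top_of_finrank_eq (by rw [h, hrank])
        apply hkerne
        rw [← hinf, hrng, inf_top_eq]
    -- commuting of each f with A, expressed through coercions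
    have hAcomm : ∀ f ∈ S, ∀ v : W, ∀ (h : f ↑v ∈ W),
        ((A ⟨f ↑v, h⟩ : W) : V) = f ↑(A v) := by
      intro f hf v h
      rw [hAcoe, hAcoe, map_sub, map_smul, hcomm f hf f1 hf1S,
        hcomm f hf f1 hf1S]
    set W1 : Submodule ℝ V := (LinearMap.ker A).map W.subtype with hW1def
    set W2 : Submodule ℝ V := (LinearMap.range A).map W.subtype with hW2def
    have hW1le : W1 ≤ W := Submodule.map_subtype_le _ _
    have hW2le : W2 ≤ W := Submodule.map_subtype_le _ _
    have hrk1 : finrank ℝ W1 = finrank ℝ (LinearMap.ker A) :=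
      Submodule.finrank_map_subtype_eq _ _
    have hrk2 : finrank ℝ W2 = finrank ℝ (LinearMap.range A) :=
      Submodule.finrank_map_subtype_eq _ _
    have inv1 : ∀ f ∈ S, ∀ w ∈ W1, f w ∈ W1 := by
      intro f hf w hw
      obtain ⟨v, hvker, rfl⟩ := Submodule.mem_map.mp hw
      refine Submodule.mem_map.mpr ⟨⟨f ↑v, hinv f hf _ v.2⟩, ?_, rfl⟩
      refine LinearMap.mem_ker.mpr (Subtype.ext ?_)
      rw [hAcomm f hf v _, LinearMap.mem_ker.mp hvker]
      simp
    have inv2 : ∀ f ∈ S, ∀ w ∈ W2, f w ∈ W2 := by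
      intro f hf w hw
      obtain ⟨v, hvrng, rfl⟩ := Submodule.mem_map.mp hw
      obtain ⟨u, rfl⟩ := hvrng
      refine Submodule.mem_map.mpr
        ⟨A ⟨f ↑u, hinv f hf _ u.2⟩, LinearMap.mem_range.mpr ⟨⟨f ↑u, hinv f hf _ u.2⟩, rfl⟩, ?_⟩
      exact hAcomm f hf u _
    obtain ⟨K1, hK1mem, hprop1⟩ := IH (finrank ℝ W1)
      (by rw [hrk1]; exact hkerlt) W1 rfl inv1
    obtain ⟨K2, hK2mem, hprop2⟩ := IH (finrank ℝ W2)
      (by rw [hrk2]; exact hrnglt) W2 rfl inv2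
    refine ⟨K1 + K2, W.add_mem (hW1le hK1mem) (hW2le hK2mem), ?_⟩
    intro f hf hfK w hw
    have hdisj' : ∀ v : V, v ∈ W1 → v ∈ W2 → v = 0 := by
      intro v hv1 hv2
      obtain ⟨a, ha, rfl⟩ := Submodule.mem_map.mp hv1
      obtain ⟨b, hb, hbeq⟩ := Submodule.mem_map.mp hv2
      have hab : b = a := Subtype.ext hbeq
      subst hab
      have : b = 0 := hdisj b ha hb
      rw [this]; rfl
    have hfKsum : f K1 + f K2 = 0 := by rw [← map_add]; exact hfK
    have hfK1 : f K1 = 0 := by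
      apply hdisj' _ (inv1 f hf K1 hK1mem)
      have h9 : f K1 = -(f K2) := eq_neg_of_add_eq_zero_left hfKsum
      rw [h9]
      exact W2.neg_mem (inv2 f hf K2 hK2mem)
    have hfK2 : f K2 = 0 := by rwa [hfK1, zero_add] at hfKsum
    have hzero1 := hprop1 f hf hfK1
    have hzero2 := hprop2 f hf hfK2
    -- decompose w
    have hwtop : (⟨w, hw⟩ : W) ∈ LinearMap.ker A ⊔ LinearMap.range A := by
      rw [hsup]; exact Submodule.mem_top
    obtain ⟨a, haker, b, hbrng, hab⟩ := Submodule.mem_sup.mp hwtop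
    have hwab : w = ↑a + ↑b := by
      have := congrArg (Subtype.val) hab
      simpa using this.symm
    rw [hwab, map_add, hzero1 ↑a (Submodule.mem_map.mpr ⟨a, haker, rfl⟩),
      hzero2 ↑b (Submodule.mem_map.mpr ⟨b, hbrng, rfl⟩), add_zero]

/-- Assume `𝔨` is simple with negative definite Killing form and `B₂`
is negative definite.  If some `P₁⁰ ∈ 𝔭₁` has abelian centralizer
`𝔱 = {Z ∈ 𝔨 : ⁅f₁ Z, P₁⁰⁆ = 0}` and `⁅f₂(𝔨), 𝔭₂⁆ ≠ 0`, then the GO condition for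
`(x, y)` implies `(1 − x)/x = c₂(y − 1)/(c₁ y)`. -/
theorem statement5
    {k g1 g2 : Type*}
    [LieRing k] [LieAlgebra ℝ k] [Module.Finite ℝ k] [LieAlgebra.IsSemisimple ℝ k]
    [LieRing g1] [LieAlgebra ℝ g1] [Module.Finite ℝ g1] [LieAlgebra.IsSemisimple ℝ g1]
    [LieRing g2] [LieAlgebra ℝ g2] [Module.Finite ℝ g2] [LieAlgebra.IsSemisimple ℝ g2]
    (f1 : k →ₗ⁅ℝ⁆ g1) (f2 : k →ₗ⁅ℝ⁆ g2)
    (hf1 : Function.Injective f1) (hf2 : Function.Injective f2)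
    (c1 c2 : ℝ) (hc1 : 0 < c1) (hc2 : 0 < c2)
    (hB1 : ∀ Z W : k, killingForm ℝ k Z W = c1 * killingForm ℝ g1 (f1 Z) (f1 W))
    (hB2 : ∀ Z W : k, killingForm ℝ k Z W = c2 * killingForm ℝ g2 (f2 Z) (f2 W))
    (p1 : Submodule ℝ g1) (hp1 : ∀ P : g1, P ∈ p1 ↔ ∀ Z : k, killingForm ℝ g1 P (f1 Z) = 0)
    (p2 : Submodule ℝ g2) (hp2 : ∀ P : g2, P ∈ p2 ↔ ∀ Z : k, killingForm ℝ g2 P (f2 Z) = 0)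
    (hsum1 : ∀ a : g1, ∃ Z : k, a - f1 Z ∈ p1)
    (hsum2 : ∀ a : g2, ∃ Z : k, a - f2 Z ∈ p2)
    (hint1 : ∀ Z : k, f1 Z ∈ p1 → Z = 0)
    (hint2 : ∀ Z : k, f2 Z ∈ p2 → Z = 0)
    (hlie1 : ∀ Z : k, ∀ P ∈ p1, ⁅f1 Z, P⁆ ∈ p1)
    (hlie2 : ∀ Z : k, ∀ P ∈ p2, ⁅f2 Z, P⁆ ∈ p2)
    (x y : ℝ) (hx : 0 < x) (hy : 0 < y)
    [LieAlgebra.IsSimple ℝ k]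
    (hknd : ∀ Z : k, Z ≠ 0 → killingForm ℝ k Z Z < 0)
    (hg2nd : ∀ a : g2, a ≠ 0 → killingForm ℝ g2 a a < 0)
    (P10 : g1) (hP10 : P10 ∈ p1)
    (habel : ∀ Z W : k, ⁅f1 Z, P10⁆ = 0 → ⁅f1 W, P10⁆ = 0 → ⁅Z, W⁆ = 0)
    (hne : ∃ (K0 : k), ∃ P2 ∈ p2, ⁅f2 K0, P2⁆ ≠ 0)
    (hGO : (∀ (K0 : k), ∀ P1 ∈ p1, ∀ P2 ∈ p2, ∃ Z W : k,
        ⁅f1 Z + (f1 K0 + P1), f1 K0 + x • P1⁆ = f1 W ∧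
        ⁅f2 Z + (-(c2 / c1) • f2 K0 + P2), -(c2 / c1) • f2 K0 + y • P2⁆ = f2 W)) :
    (1 - x) / x = c2 * (y - 1) / (c1 * y) := by
  by_contra hcontra
  have hx0 : x ≠ 0 := ne_of_gt hx
  have hy0 : y ≠ 0 := ne_of_gt hy
  have hc10 : c1 ≠ 0 := ne_of_gt hc1
  -- inner product structure on k coming from the negative of the Killing form
  letI core : InnerProductSpace.Core ℝ k :=
  { inner := fun a b => -killingForm ℝ k a b
    conj_inner_symm := by
      intro a b
      simp only [starRingEnd_apply, star_trivial, neg_inj]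
      exact LieModule.traceForm_comm ℝ k k b a
    re_inner_nonneg := by
      intro a
      rcases eq_or_ne a 0 with rfl | ha
      · simp
      · have := hknd a ha
        simp only [RCLike.re_to_real]
        linarith
    add_left := by
      intro a b c
      simp only [map_add, LinearMap.add_apply, neg_add]
    smul_left := by
      intro a b r
      simp [LinearMap.map_smul₂, smul_eq_mul]
    definite := by
      intro a h
      by_contra ha
      have := hknd a ha
      change -killingForm ℝ k a a = 0 at h
      linarith [neg_eq_zero.mp h] }
  letI : NormedAddCommGroup k := core.toNormedAddCommGroup
  letI : InnerProductSpace ℝ k := InnerProductSpace.ofCore core.toCore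
  have hinner : ∀ a b : k, (inner ℝ a b : ℝ) = -killingForm ℝ k a b := fun _ _ => rfl
  -- the commuting family of skew-adjoint operators coming from the centralizer of P10
  set S : Set (k →ₗ[ℝ] k) :=
    (fun T => (LieAlgebra.ad ℝ k T : k →ₗ[ℝ] k)) '' {T : k | ⁅f1 T, P10⁆ = 0} with hSdef
  have hskew : ∀ g ∈ S, ∀ a b : k, (inner ℝ (g a) b : ℝ) = -(inner ℝ a (g b) : ℝ) := by
    rintro g ⟨T, hT, rfl⟩ a b
    have h1 := LieModule.traceForm_apply_lie_apply ℝ k k a T b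
    have h3 : killingForm ℝ k ⁅a, T⁆ b = -killingForm ℝ k ⁅T, a⁆ b := by
      rw [← lie_skew a T]
      exact LinearMap.map_neg₂ _ _ _
    rw [hinner, hinner, LieAlgebra.ad_apply, LieAlgebra.ad_apply, neg_neg, ← h1, h3]
  have hcomm : ∀ g ∈ S, ∀ g' ∈ S, ∀ v : k, g (g' v) = g' (g v) := by
    rintro g ⟨T, hT, rfl⟩ g' ⟨T', hT', rfl⟩ v
    simp only [LieAlgebra.ad_apply]
    rw [leibniz_lie, habel T T' hT hT', zero_lie, zero_add]
  obtain ⟨K, -, hK⟩ := aux_reg S hskew hcomm (Module.finrank ℝ (⊤ : Submodule ℝ k)) ⊤ rfl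
    (fun f hf w hw => Submodule.mem_top)
  have hKreg : ∀ T : k, ⁅f1 T, P10⁆ = 0 → ⁅T, K⁆ = 0 → T = 0 := by
    intro T hT hTK
    have hadT := hK (LieAlgebra.ad ℝ k T) ⟨T, hT, rfl⟩
      (by simpa [LieAlgebra.ad_apply] using hTK)
    by_contra hTne
    have h1 : killingForm ℝ k T T = 0 := by
      rw [killingForm_apply_apply]
      have h2 : (LieAlgebra.ad ℝ k T : k →ₗ[ℝ] k) = 0 := LinearMap.ext fun w => by
        simpa [LieAlgebra.ad_apply] using hadT w Submodule.mem_top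
      rw [h2]
      simp
    exact absurd h1 (ne_of_lt (hknd T hTne))
  -- main derivation from the GO condition
  have hmain : ∀ K0 : k, (∀ T : k, ⁅f1 T, P10⁆ = 0 → ⁅T, K0⁆ = 0 → T = 0) →
      ∀ P2' ∈ p2, ⁅f2 K0, P2'⁆ = 0 := by
    intro K0 hK0 P2' hP2'
    obtain ⟨Z, Wk, e1, e2⟩ := hGO K0 P10 hP10 P2' hP2'
    -- expand the first bracket
    have e1' : f1 ⁅Z, K0⁆ + (x • ⁅f1 Z, P10⁆ + x • ⁅f1 K0, P10⁆ - ⁅f1 K0, P10⁆) = f1 Wk := by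
      rw [← e1, LieHom.map_lie]
      simp only [add_lie, lie_add, lie_smul, lie_self, smul_zero, add_zero]
      rw [(lie_skew P10 (f1 K0)).symm]
      module
    have hq1mem : x • ⁅f1 Z, P10⁆ + x • ⁅f1 K0, P10⁆ - ⁅f1 K0, P10⁆ ∈ p1 :=
      sub_mem (add_mem (p1.smul_mem _ (hlie1 Z P10 hP10)) (p1.smul_mem _ (hlie1 K0 P10 hP10)))
        (hlie1 K0 P10 hP10)
    have hWZ0 : Wk - ⁅Z, K0⁆ = 0 := by
      apply hint1
      rw [map_sub]
      have : f1 Wk - f1 ⁅Z, K0⁆ = x • ⁅f1 Z, P10⁆ + x • ⁅f1 K0, P10⁆ - ⁅f1 K0, P10⁆ := by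
        rw [← e1']; abel
      rw [this]
      exact hq1mem
    have hWk : Wk = ⁅Z, K0⁆ := by rwa [sub_eq_zero] at hWZ0
    have hq1zero : x • ⁅f1 Z, P10⁆ + x • ⁅f1 K0, P10⁆ - ⁅f1 K0, P10⁆ = 0 := by
      have h := e1'
      rw [hWk] at h
      exact add_eq_left.mp h
    -- expand the second bracket
    have e2' : (-(c2 / c1)) • f2 ⁅Z, K0⁆ +
        (y • ⁅f2 Z, P2'⁆ + (-(c2 / c1) * y) • ⁅f2 K0, P2'⁆ + (c2 / c1) • ⁅f2 K0, P2'⁆)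
        = f2 Wk := by
      rw [← e2, LieHom.map_lie]
      simp only [add_lie, lie_add, lie_smul, smul_lie, lie_neg, neg_lie, lie_self, smul_zero,
        neg_zero, add_zero, zero_add, smul_neg, neg_neg]
      rw [(lie_skew P2' (f2 K0)).symm]
      module
    have hq2mem : y • ⁅f2 Z, P2'⁆ + (-(c2 / c1) * y) • ⁅f2 K0, P2'⁆ +
        (c2 / c1) • ⁅f2 K0, P2'⁆ ∈ p2 :=
      add_mem (add_mem (p2.smul_mem _ (hlie2 Z P2' hP2')) (p2.smul_mem _ (hlie2 K0 P2' hP2')))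
        (p2.smul_mem _ (hlie2 K0 P2' hP2'))
    have hWZ2 : Wk + (c2 / c1) • ⁅Z, K0⁆ = 0 := by
      apply hint2
      rw [map_add, map_smul]
      have : f2 Wk + (c2 / c1) • f2 ⁅Z, K0⁆ =
          y • ⁅f2 Z, P2'⁆ + (-(c2 / c1) * y) • ⁅f2 K0, P2'⁆ + (c2 / c1) • ⁅f2 K0, P2'⁆ := by
        rw [← e2']; module
      rw [this]
      exact hq2mem
    have hZK0 : ⁅Z, K0⁆ = (0 : k) := by
      rw [hWk] at hWZ2
      have h : (1 + c2 / c1) • ⁅Z, K0⁆ = 0 := by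
        rw [add_smul, one_smul]
        exact hWZ2
      have hpos : (1 : ℝ) + c2 / c1 ≠ 0 := by positivity
      exact (smul_eq_zero.mp h).resolve_left hpos
    have hq2zero : y • ⁅f2 Z, P2'⁆ + (-(c2 / c1) * y) • ⁅f2 K0, P2'⁆ +
        (c2 / c1) • ⁅f2 K0, P2'⁆ = 0 := by
      have h := e2'
      rw [hWk, hZK0] at h
      simpa using h
    -- deduce that Z is proportional to K0
    have ha : ⁅f1 Z, P10⁆ = ((1 - x) / x) • ⁅f1 K0, P10⁆ := by
      have h : x • ⁅f1 Z, P10⁆ = (1 - x) • ⁅f1 K0, P10⁆ := by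
        linear_combination (norm := module) hq1zero
      have h2 : ⁅f1 Z, P10⁆ = x⁻¹ • ((1 - x) • ⁅f1 K0, P10⁆) := by
        rw [← h, inv_smul_smul₀ hx0]
      rw [h2, smul_smul]
      congr 1
      field_simp
    have hT1 : ⁅f1 (Z - ((1 - x) / x) • K0), P10⁆ = 0 := by
      rw [map_sub, map_smul, sub_lie, smul_lie, ha, sub_self]
    have hT2 : ⁅Z - ((1 - x) / x) • K0, K0⁆ = 0 := by
      rw [sub_lie, smul_lie, hZK0, lie_self, smul_zero, sub_self]
    have hZeq : Z = ((1 - x) / x) • K0 := by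
      have := hK0 _ hT1 hT2
      rwa [sub_eq_zero] at this
    -- conclude
    have hfZ : ⁅f2 Z, P2'⁆ = ((1 - x) / x) • ⁅f2 K0, P2'⁆ := by
      rw [hZeq, map_smul, smul_lie]
    rw [hfZ] at hq2zero
    have hs : y * ((1 - x) / x) - (c2 / c1) * y + (c2 / c1) ≠ 0 := by
      intro h0
      apply hcontra
      field_simp at h0 ⊢
      nlinarith [h0]
    have hfinal : (y * ((1 - x) / x) - (c2 / c1) * y + (c2 / c1)) • ⁅f2 K0, P2'⁆ = 0 := by
      linear_combination (norm := module) hq2zero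
    exact (smul_eq_zero.mp hfinal).resolve_left hs
  -- the ideal of elements acting trivially on p2
  obtain ⟨K0', P2', hP2'mem, hP2'ne⟩ := hne
  by_cases hKeq : K = 0
  · -- the centralizer is trivial, so every K0 works
    have htriv : ∀ T : k, ⁅f1 T, P10⁆ = 0 → T = 0 := fun T h =>
      hKreg T h (by rw [hKeq, lie_zero])
    exact hP2'ne (hmain K0' (fun T h _ => htriv T h) P2' hP2'mem)
  · have hKN : ∀ P ∈ p2, ⁅f2 K, P⁆ = 0 := hmain K hKreg
    let N : LieIdeal ℝ k :=
      { carrier := {U : k | ∀ P ∈ p2, ⁅f2 U, P⁆ = 0}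
        add_mem' := by
          intro a b ha hb P hP
          rw [map_add, add_lie, ha P hP, hb P hP, add_zero]
        zero_mem' := by
          intro P hP
          rw [map_zero, zero_lie]
        smul_mem' := by
          intro r a ha P hP
          rw [map_smul, smul_lie, ha P hP, smul_zero]
        lie_mem := by
          intro u a ha P hP
          rw [LieHom.map_lie, lie_lie, ha P hP, lie_zero, zero_sub,
            ha ⁅f2 u, P⁆ (hlie2 u P hP), neg_zero] }
    have hKmem : K ∈ N := hKN
    rcases LieAlgebra.IsSimple.eq_bot_or_eq_top N with hbot | htop
    · rw [hbot] at hKmem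
      exact hKeq (by simpa using hKmem)
    · have : K0' ∈ N := by rw [htop]; exact LieSubmodule.mem_top _
      exact hP2'ne (this P2' hP2'mem)
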